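/- arXiv:2309.12773 — 4 statements merged into one kernel-verified Lean document; each statement's English description precedes it below -/
import Mathlib

section
/- Let τ > 0 and let w ∈ L²(ℝ) be real-valued. Then for every φ ∈ C_c^∞(ℝ): |∫_ℝ (−w(x)·φ'(x) + 2τ·w(x)·φ(x) + w(x)²·φ(x)) dx| ≤ (2 + τ^{−1/2}·‖w‖_{L²})·‖w‖_{L²}·(∫_ℝ (φ'(x)² + τ²·φ(x)²) dx)^{1/2}. Equivalently, the distribution u = w' + 2τw + w² (the modified Miura image of w) satisfies ‖u‖_{H^{−1}_τ} ≤ (2 + τ^{−1/2}‖w‖_{L²})·‖w‖_{L²}. -/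
open MeasureTheory

private lemma l2_cs {f g : ℝ → ℝ} (hf : MemLp f 2 (volume : Measure ℝ))
    (hg : MemLp g 2 (volume : Measure ℝ)) :
    |∫ x : ℝ, f x * g x| ≤ Real.sqrt (∫ x : ℝ, (f x) ^ 2) * Real.sqrt (∫ x : ℝ, (g x) ^ 2) := by
  have hfa : MemLp (fun x => |f x|) 2 (volume : Measure ℝ) := by
    simpa [Real.norm_eq_abs] using hf.norm
  have hga : MemLp (fun x => |g x|) 2 (volume : Measure ℝ) := by
    simpa [Real.norm_eq_abs] using hg.norm
  have hpq : (2:ℝ).HolderConjugate 2 := Real.HolderConjugate.two_two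
  have h2 : ENNReal.ofReal (2:ℝ) = 2 := by simp
  have hcs := integral_mul_le_Lp_mul_Lq_of_nonneg (μ := (volume : Measure ℝ)) hpq
    (f := fun x => |f x|) (g := fun x => |g x|)
    (Filter.Eventually.of_forall fun x => abs_nonneg _)
    (Filter.Eventually.of_forall fun x => abs_nonneg _)
    (by rw [h2]; exact hfa) (by rw [h2]; exact hga)
  have key : ∀ y : ℝ, |y| ^ (2:ℝ) = y ^ 2 := fun y => by
    rw [show (2:ℝ) = ((2:ℕ):ℝ) by norm_num, Real.rpow_natCast, sq_abs]
  calc |∫ x : ℝ, f x * g x| ≤ ∫ x : ℝ, |f x| * |g x| := by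
        simpa [Real.norm_eq_abs, abs_mul] using
          norm_integral_le_integral_norm (μ := (volume : Measure ℝ)) (fun x => f x * g x)
  _ ≤ (∫ x : ℝ, |f x| ^ (2:ℝ)) ^ (1/2:ℝ) * (∫ x : ℝ, |g x| ^ (2:ℝ)) ^ (1/2:ℝ) := hcs
  _ = Real.sqrt (∫ x : ℝ, (f x) ^ 2) * Real.sqrt (∫ x : ℝ, (g x) ^ 2) := by
        simp only [key]
        rw [Real.sqrt_eq_rpow, Real.sqrt_eq_rpow]

private lemma integrable_mul_l2 {f g : ℝ → ℝ} (hf : MemLp f 2 (volume : Measure ℝ))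
    (hg : MemLp g 2 (volume : Measure ℝ)) :
    Integrable (fun x => f x * g x) (volume : Measure ℝ) := by
  have h := hg.smul (φ := f) hf (p := 2) (q := 2) (r := 1)
  rw [← memLp_one_iff_integrable]
  exact h

/-- The modified Miura image `u = w' + 2τw + w²` of `w ∈ L²(ℝ)` satisfies
`‖u‖_{H^{-1}_τ} ≤ (2 + τ^{-1/2}‖w‖_{L²})‖w‖_{L²}`, expressed through the pairing
with compactly supported smooth test functions. -/
theorem stmt_1 (τ : ℝ) (hτ : 0 < τ) (w : ℝ → ℝ)
    (hw : MemLp w 2 (volume : Measure ℝ)) :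
    ∀ φ : ℝ → ℝ, ContDiff ℝ (⊤ : ℕ∞) φ → HasCompactSupport φ →
      |∫ x : ℝ, (-(w x) * deriv φ x + 2 * τ * w x * φ x + (w x) ^ 2 * φ x)|
        ≤ (2 + τ ^ (-(1 : ℝ) / 2) * Real.sqrt (∫ x : ℝ, (w x) ^ 2))
            * Real.sqrt (∫ x : ℝ, (w x) ^ 2)
            * Real.sqrt (∫ x : ℝ, ((deriv φ x) ^ 2 + τ ^ 2 * (φ x) ^ 2)) := by
  intro φ hφs hφc
  have hφcont : Continuous φ := hφs.continuous
  have hφ'cont : Continuous (deriv φ) := hφs.continuous_deriv (by exact_mod_cast le_top)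
  have hφ'c : HasCompactSupport (deriv φ) := hφc.deriv
  have hφ2 : MemLp φ 2 (volume : Measure ℝ) := hφcont.memLp_of_hasCompactSupport hφc
  have hφ'2 : MemLp (deriv φ) 2 (volume : Measure ℝ) := hφ'cont.memLp_of_hasCompactSupport hφ'c
  set g : ℝ → ℝ := fun x => 2 * τ * φ x - deriv φ x with hg_def
  have hg2 : MemLp g 2 (volume : Measure ℝ) := by
    have h := (hφ2.const_mul (2 * τ)).sub hφ'2
    have he : g = (fun x => 2 * τ * φ x) - deriv φ := by
      funext x; simp [hg_def]
    rw [he]; exact h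
  -- basic integrability
  have hwg : Integrable (fun x => w x * g x) (volume : Measure ℝ) := integrable_mul_l2 hw hg2
  have hw2int : Integrable (fun x => (w x) ^ 2) (volume : Measure ℝ) := by
    simpa [pow_two] using integrable_mul_l2 hw hw
  have hφ2int : Integrable (fun x => (φ x) ^ 2) (volume : Measure ℝ) :=
    ((hφcont.mul hφcont).integrable_of_hasCompactSupport hφc.mul_left).congr
      (Filter.Eventually.of_forall fun x => by rw [Pi.mul_apply]; ring)
  have hφ'2int : Integrable (fun x => (deriv φ x) ^ 2) (volume : Measure ℝ) :=
    ((hφ'cont.mul hφ'cont).integrable_of_hasCompactSupport hφ'c.mul_left).congr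
      (Filter.Eventually.of_forall fun x => by rw [Pi.mul_apply]; ring)
  have hφφ'int : Integrable (fun x => φ x * deriv φ x) (volume : Measure ℝ) :=
    (hφcont.mul hφ'cont).integrable_of_hasCompactSupport hφ'c.mul_left
  have hφφ'absint : Integrable (fun x => |φ x * deriv φ x|) (volume : Measure ℝ) := hφφ'int.abs
  -- derivative of φ² and FTC facts
  have hder : ∀ t : ℝ, HasDerivAt (fun s => (φ s) ^ 2) (2 * φ t * deriv φ t) t := by
    intro t
    have h := ((hφs.differentiable (by simp)).differentiableAt (x := t)).hasDerivAt
    have := h.pow 2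
    show HasDerivAt (φ ^ 2) _ t
    simpa [mul_comm, mul_assoc, mul_left_comm] using this
  -- support bounds
  obtain ⟨a, ha⟩ := hφc.isCompact.bddBelow
  obtain ⟨b, hb⟩ := hφc.isCompact.bddAbove
  have hout : ∀ x : ℝ, x < min a b ∨ max a b < x → φ x = 0 := by
    intro x hx
    apply image_eq_zero_of_notMem_tsupport
    intro hmem
    rcases hx with h | h
    · exact absurd (ha hmem) (not_le.mpr (lt_of_lt_of_le h (min_le_left a b)))
    · exact absurd (hb hmem) (not_le.mpr (lt_of_le_of_lt (le_max_right a b) h))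
  -- ∫ φ φ' = 0
  have hzero : ∫ x : ℝ, φ x * deriv φ x = 0 := by
    set a' : ℝ := min a b - 1 with ha'
    set b' : ℝ := max a b + 1 with hb'
    have hab' : a' ≤ b' := by
      have : min a b ≤ max a b := (min_le_left a b).trans (le_max_left a b)
      simp only [ha', hb']; linarith
    have hφa' : φ a' = 0 := hout a' (Or.inl (ha' ▸ sub_one_lt _))
    have hφb' : φ b' = 0 := hout b' (Or.inr (hb' ▸ lt_add_one _))
    have hFTC : ∫ t in a'..b', 2 * φ t * deriv φ t = (φ b') ^ 2 - (φ a') ^ 2 :=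
      intervalIntegral.integral_eq_sub_of_hasDerivAt (fun t _ => hder t)
        (((continuous_const.mul hφcont).mul hφ'cont).intervalIntegrable a' b')
    have hcompl : ∀ x : ℝ, x ∉ Set.Ioc a' b' → 2 * φ x * deriv φ x = 0 := by
      intro x hx
      have : φ x = 0 := by
        apply hout
        rcases le_or_gt x a' with h1 | h1
        · exact Or.inl (by simp only [ha'] at h1; linarith)
        · have h2 : b' < x := by
            by_contra hc; push_neg at hc; exact hx ⟨h1, hc⟩
          exact Or.inr (by simp only [hb'] at h2; linarith)
      simp [this]
    have h1 : ∫ t in a'..b', 2 * φ t * deriv φ t = ∫ x : ℝ, 2 * φ x * deriv φ x := by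
      rw [intervalIntegral.integral_of_le hab']
      exact setIntegral_eq_integral_of_forall_compl_eq_zero hcompl
    have h2 : ∫ x : ℝ, 2 * φ x * deriv φ x = 2 * ∫ x : ℝ, φ x * deriv φ x := by
      simp only [mul_assoc]
      exact integral_const_mul 2 _
    rw [h1, h2, hφa', hφb'] at hFTC
    simp only [ne_eq, OfNat.ofNat_ne_zero, not_false_eq_true] at *
    nlinarith [hFTC]
  -- set abbreviations
  set A : ℝ := ∫ x : ℝ, (deriv φ x) ^ 2 with hA_def
  set B : ℝ := ∫ x : ℝ, (φ x) ^ 2 with hB_def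
  set NN : ℝ := ∫ x : ℝ, ((deriv φ x) ^ 2 + τ ^ 2 * (φ x) ^ 2) with hNN_def
  have hA0 : 0 ≤ A := integral_nonneg fun x => sq_nonneg _
  have hB0 : 0 ≤ B := integral_nonneg fun x => sq_nonneg _
  have hNN : NN = A + τ ^ 2 * B := by
    rw [hNN_def, integral_add hφ'2int (hφ2int.const_mul _), hA_def, hB_def,
      integral_const_mul]
  have hNN0 : 0 ≤ NN := integral_nonneg fun x => by positivity
  -- pointwise sup bound for φ
  have hsup : ∀ x : ℝ, (φ x) ^ 2 ≤ 2 * (∫ t : ℝ, |φ t * deriv φ t|) := by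
    intro x
    set a' : ℝ := min (min a b - 1) x with ha'
    have hφa' : φ a' = 0 :=
      hout a' (Or.inl (lt_of_le_of_lt (min_le_left _ _) (sub_one_lt _)))
    have hax : a' ≤ x := min_le_right _ _
    have hFTC : ∫ t in a'..x, 2 * φ t * deriv φ t = (φ x) ^ 2 - (φ a') ^ 2 :=
      intervalIntegral.integral_eq_sub_of_hasDerivAt (fun t _ => hder t)
        (((continuous_const.mul hφcont).mul hφ'cont).intervalIntegrable a' x)
    have h1 : |∫ t in a'..x, 2 * φ t * deriv φ t| ≤ ∫ t in a'..x, |2 * φ t * deriv φ t| :=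
      intervalIntegral.abs_integral_le_integral_abs hax
    have h2 : ∫ t in a'..x, |2 * φ t * deriv φ t| ≤ ∫ t : ℝ, |2 * φ t * deriv φ t| := by
      rw [intervalIntegral.integral_of_le hax]
      exact setIntegral_le_integral
        ((hφφ'absint.const_mul 2).congr (Filter.Eventually.of_forall fun t => by
          show 2 * |φ t * deriv φ t| = |2 * φ t * deriv φ t|
          simp [abs_mul, mul_assoc]))
        (Filter.Eventually.of_forall fun t => abs_nonneg _)
    have h3 : ∫ t : ℝ, |2 * φ t * deriv φ t| = 2 * ∫ t : ℝ, |φ t * deriv φ t| := by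
      rw [← integral_const_mul]
      congr 1; funext t
      rw [mul_assoc, abs_mul]
      norm_num
    calc (φ x) ^ 2 = (φ x) ^ 2 - (φ a') ^ 2 := by rw [hφa']; ring
    _ = ∫ t in a'..x, 2 * φ t * deriv φ t := hFTC.symm
    _ ≤ |∫ t in a'..x, 2 * φ t * deriv φ t| := le_abs_self _
    _ ≤ ∫ t in a'..x, |2 * φ t * deriv φ t| := h1
    _ ≤ ∫ t : ℝ, |2 * φ t * deriv φ t| := h2
    _ = 2 * ∫ t : ℝ, |φ t * deriv φ t| := h3
  -- Cauchy-Schwarz for the sup bound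
  have hcsφ : (∫ t : ℝ, |φ t * deriv φ t|) ≤ Real.sqrt B * Real.sqrt A := by
    have habs2 : MemLp (fun x => |φ x|) 2 (volume : Measure ℝ) := by
      simpa [Real.norm_eq_abs] using hφ2.norm
    have habs'2 : MemLp (fun x => |deriv φ x|) 2 (volume : Measure ℝ) := by
      simpa [Real.norm_eq_abs] using hφ'2.norm
    have h := l2_cs habs2 habs'2
    simp only [sq_abs] at h
    calc (∫ t : ℝ, |φ t * deriv φ t|) = ∫ t : ℝ, |φ t| * |deriv φ t| := by
          congr 1; funext t; rw [abs_mul]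
    _ ≤ Real.sqrt B * Real.sqrt A := le_trans (le_abs_self _) h
  -- sup bound in terms of NN
  have hφbd : ∀ x : ℝ, |φ x| ≤ τ ^ (-(1:ℝ)/2) * Real.sqrt NN := by
    intro x
    have hAM : 2 * (Real.sqrt B * Real.sqrt A) ≤ NN / τ := by
      have hsA : Real.sqrt A ^ 2 = A := Real.sq_sqrt hA0
      have hsB : Real.sqrt B ^ 2 = B := Real.sq_sqrt hB0
      have h1 : 0 ≤ (Real.sqrt A - τ * Real.sqrt B) ^ 2 := sq_nonneg _
      rw [hNN, le_div_iff₀ hτ]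
      nlinarith [Real.sqrt_nonneg A, Real.sqrt_nonneg B, h1, hsA, hsB]
    have hx2 : (φ x) ^ 2 ≤ NN / τ := by
      have h1 := hsup x
      have h2 : 2 * (∫ t : ℝ, |φ t * deriv φ t|) ≤ 2 * (Real.sqrt B * Real.sqrt A) := by
        linarith [hcsφ]
      linarith [hAM]
    have hrpow : τ ^ (-(1:ℝ)/2) = (Real.sqrt τ)⁻¹ := by
      rw [neg_div, Real.rpow_neg hτ.le, ← Real.sqrt_eq_rpow]
    calc |φ x| = Real.sqrt ((φ x) ^ 2) := (Real.sqrt_sq_eq_abs _).symm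
    _ ≤ Real.sqrt (NN / τ) := Real.sqrt_le_sqrt hx2
    _ = Real.sqrt NN / Real.sqrt τ := Real.sqrt_div hNN0 τ
    _ = τ ^ (-(1:ℝ)/2) * Real.sqrt NN := by rw [hrpow]; ring
  -- integrability of w² φ
  have hφmeas : AEStronglyMeasurable φ (volume : Measure ℝ) := hφcont.aestronglyMeasurable
  have hw2φ : Integrable (fun x => (w x) ^ 2 * φ x) (volume : Measure ℝ) := by
    have h := hw2int.bdd_mul (f := φ) (c := τ ^ (-(1:ℝ)/2) * Real.sqrt NN) hφmeas
      (Filter.Eventually.of_forall fun x => by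
        simpa [Real.norm_eq_abs] using hφbd x)
    exact h.congr (Filter.Eventually.of_forall fun x => by ring)
  -- integral of g²
  have hgsq : ∫ x : ℝ, (g x) ^ 2 = 4 * τ ^ 2 * B + A := by
    have hfe : (fun x => (g x) ^ 2)
        = fun x => (4 * τ ^ 2 * (φ x) ^ 2 + (deriv φ x) ^ 2)
            - 4 * τ * (φ x * deriv φ x) := by
      funext x; simp only [hg_def]; ring
    have hI1 : Integrable (fun x => 4 * τ ^ 2 * (φ x) ^ 2 + (deriv φ x) ^ 2)
        (volume : Measure ℝ) := (hφ2int.const_mul (4 * τ ^ 2)).add hφ'2int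
    have hI2 : Integrable (fun x => 4 * τ * (φ x * deriv φ x)) (volume : Measure ℝ) :=
      hφφ'int.const_mul (4 * τ)
    have e1 : ∫ x : ℝ, ((4 * τ ^ 2 * (φ x) ^ 2 + (deriv φ x) ^ 2)
          - 4 * τ * (φ x * deriv φ x))
        = (∫ x : ℝ, (4 * τ ^ 2 * (φ x) ^ 2 + (deriv φ x) ^ 2))
          - ∫ x : ℝ, 4 * τ * (φ x * deriv φ x) := integral_sub hI1 hI2
    have e2 : ∫ x : ℝ, (4 * τ ^ 2 * (φ x) ^ 2 + (deriv φ x) ^ 2)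
        = (∫ x : ℝ, 4 * τ ^ 2 * (φ x) ^ 2) + ∫ x : ℝ, (deriv φ x) ^ 2 :=
      integral_add (hφ2int.const_mul _) hφ'2int
    have e3 : ∫ x : ℝ, 4 * τ ^ 2 * (φ x) ^ 2 = 4 * τ ^ 2 * ∫ x : ℝ, (φ x) ^ 2 :=
      integral_const_mul _ _
    have e4 : ∫ x : ℝ, 4 * τ * (φ x * deriv φ x) = 4 * τ * ∫ x : ℝ, φ x * deriv φ x :=
      integral_const_mul _ _
    calc ∫ x : ℝ, (g x) ^ 2
        = ∫ x : ℝ, ((4 * τ ^ 2 * (φ x) ^ 2 + (deriv φ x) ^ 2)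
            - 4 * τ * (φ x * deriv φ x)) := by rw [hfe]
    _ = 4 * τ ^ 2 * B + A := by rw [e1, e2, e3, e4, hzero, ← hA_def, ← hB_def]; ring
  have hgN : Real.sqrt (∫ x : ℝ, (g x) ^ 2) ≤ 2 * Real.sqrt NN := by
    have h4 : ∫ x : ℝ, (g x) ^ 2 ≤ 4 * NN := by rw [hgsq, hNN]; nlinarith [hA0]
    calc Real.sqrt (∫ x : ℝ, (g x) ^ 2) ≤ Real.sqrt (4 * NN) := Real.sqrt_le_sqrt h4
    _ = 2 * Real.sqrt NN := by
        rw [show (4:ℝ) * NN = 2 ^ 2 * NN by norm_num, Real.sqrt_mul (by positivity) NN,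
          Real.sqrt_sq (by norm_num)]
  -- abbreviations for w
  set W : ℝ := Real.sqrt (∫ x : ℝ, (w x) ^ 2) with hW_def
  have hW0 : 0 ≤ W := Real.sqrt_nonneg _
  have hW2 : W ^ 2 = ∫ x : ℝ, (w x) ^ 2 :=
    Real.sq_sqrt (integral_nonneg fun x => sq_nonneg _)
  -- the two terms
  have hterm1 : |∫ x : ℝ, w x * g x| ≤ W * (2 * Real.sqrt NN) :=
    (l2_cs hw hg2).trans (mul_le_mul_of_nonneg_left hgN hW0)
  set C : ℝ := τ ^ (-(1:ℝ)/2) * Real.sqrt NN with hC_def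
  have hC0 : 0 ≤ C := mul_nonneg (Real.rpow_nonneg hτ.le _) (Real.sqrt_nonneg _)
  have hterm2 : |∫ x : ℝ, (w x) ^ 2 * φ x| ≤ C * W ^ 2 := by
    calc |∫ x : ℝ, (w x) ^ 2 * φ x| ≤ ∫ x : ℝ, |(w x) ^ 2 * φ x| := by
          simpa only [Real.norm_eq_abs] using
            norm_integral_le_integral_norm (μ := (volume : Measure ℝ))
              (fun x => (w x) ^ 2 * φ x)
    _ ≤ ∫ x : ℝ, (w x) ^ 2 * C := by
        refine integral_mono hw2φ.abs (hw2int.mul_const C) fun x => ?_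
        rw [abs_mul, abs_of_nonneg (sq_nonneg (w x))]
        exact mul_le_mul_of_nonneg_left (hφbd x) (sq_nonneg _)
    _ = C * W ^ 2 := by rw [integral_mul_const, hW2]; ring
  -- split the integral
  have hsplit : ∫ x : ℝ, (-(w x) * deriv φ x + 2 * τ * w x * φ x + (w x) ^ 2 * φ x)
      = (∫ x : ℝ, w x * g x) + ∫ x : ℝ, (w x) ^ 2 * φ x := by
    rw [← integral_add hwg hw2φ]
    congr 1; funext x; simp only [hg_def]; ring
  calc |∫ x : ℝ, (-(w x) * deriv φ x + 2 * τ * w x * φ x + (w x) ^ 2 * φ x)|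
      = |(∫ x : ℝ, w x * g x) + ∫ x : ℝ, (w x) ^ 2 * φ x| := by rw [hsplit]
  _ ≤ |∫ x : ℝ, w x * g x| + |∫ x : ℝ, (w x) ^ 2 * φ x| := abs_add_le _ _
  _ ≤ W * (2 * Real.sqrt NN) + C * W ^ 2 := add_le_add hterm1 hterm2
  _ = (2 + τ ^ (-(1:ℝ)/2) * W) * W * Real.sqrt NN := by rw [hC_def]; ring
end

section
/- There is an absolute constant C > 0 such that: whenever w, v, g ∈ L²((−2,2)) are real-valued and satisfy the Riccati equation w' + 2w + w² = v' + g in the sense of distributions on (−2,2), that is, ∫ (−w·φ' + (2w + w²)·φ) dx = ∫ (−v·φ' + g·φ) dx for all φ ∈ C_c^∞((−2,2)), then ‖w‖_{L²((−1,1))} ≤ C·(1 + ‖v‖_{L²((−2,2))} + ‖g‖_{L²((−2,2))}). -/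
open MeasureTheory

private lemma my_sqrt_add {a b : ℝ} (ha : 0 ≤ a) (hb : 0 ≤ b) :
    Real.sqrt (a + b) ≤ Real.sqrt a + Real.sqrt b := by
  rw [← Real.sqrt_sq (by positivity : (0:ℝ) ≤ Real.sqrt a + Real.sqrt b)]
  apply Real.sqrt_le_sqrt
  nlinarith [Real.sq_sqrt ha, Real.sq_sqrt hb, Real.sqrt_nonneg a, Real.sqrt_nonneg b]

set_option maxHeartbeats 1000000 in
/-- Large-data local a priori bound for the Riccati equation `w' + 2w + w² = v' + g`
(distributionally on `(-2,2)`, with `w, v, g ∈ L²((-2,2))`):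
`‖w‖_{L²((-1,1))} ≤ C (1 + ‖v‖_{L²((-2,2))} + ‖g‖_{L²((-2,2))})`. -/
theorem stmt_4 : ∃ C : ℝ, 0 < C ∧
    ∀ w v g : ℝ → ℝ,
      MemLp w 2 (volume.restrict (Set.Ioo (-2 : ℝ) 2)) →
      MemLp v 2 (volume.restrict (Set.Ioo (-2 : ℝ) 2)) →
      MemLp g 2 (volume.restrict (Set.Ioo (-2 : ℝ) 2)) →
      (∀ φ : ℝ → ℝ, ContDiff ℝ (⊤ : ℕ∞) φ → HasCompactSupport φ →
        tsupport φ ⊆ Set.Ioo (-2 : ℝ) 2 →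
        ∫ x in Set.Ioo (-2 : ℝ) 2,
            (-(w x) * deriv φ x + (2 * w x + (w x) ^ 2) * φ x)
          = ∫ x in Set.Ioo (-2 : ℝ) 2, (-(v x) * deriv φ x + g x * φ x)) →
      Real.sqrt (∫ x in Set.Ioo (-1 : ℝ) 1, (w x) ^ 2)
        ≤ C * (1 + Real.sqrt (∫ x in Set.Ioo (-2 : ℝ) 2, (v x) ^ 2)
            + Real.sqrt (∫ x in Set.Ioo (-2 : ℝ) 2, (g x) ^ 2)) := by
  have hfin : IsFiniteMeasure (volume.restrict (Set.Ioo (-2 : ℝ) 2)) := by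
    constructor
    rw [Measure.restrict_apply_univ, Real.volume_Ioo]
    exact ENNReal.ofReal_lt_top
  -- the cutoff function
  set ψb : ContDiffBump (0 : ℝ) := ⟨1, 3/2, by norm_num, by norm_num⟩ with hψb
  set ψ : ℝ → ℝ := fun x => ψb x with hψdef
  have hψc : ContDiff ℝ (⊤ : ℕ∞) ψ := ψb.contDiff
  have hψcont : Continuous ψ := hψc.continuous
  have hψcs : HasCompactSupport ψ := ψb.hasCompactSupport
  set ψ' : ℝ → ℝ := deriv ψ with hψ'def
  have hψ'cont : Continuous ψ' := hψc.continuous_deriv (by exact_mod_cast le_top)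
  have hψ'cs : HasCompactSupport ψ' := hψcs.deriv
  obtain ⟨M, hM⟩ := hψ'cont.bounded_above_of_compact_support hψ'cs
  have hψ0 : ∀ x, 0 ≤ ψ x := fun x => ψb.nonneg
  have hψ1 : ∀ x, ψ x ≤ 1 := fun x => ψb.le_one
  set B : ℝ → ℝ := fun x =>
    4 * ψ' x ^ 2 + 4 * ψ x ^ 2 + (ψ x * ψ' x) ^ 2 + (ψ x) ^ 4 / 2 with hBdef
  set K : ℝ := ∫ x in Set.Ioo (-2 : ℝ) 2, B x with hKdef
  have hBcont : Continuous B := by fun_prop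
  have hBint : Integrable B (volume.restrict (Set.Ioo (-2 : ℝ) 2)) :=
    (hBcont.integrableOn_Icc (a := (-2:ℝ)) (b := 2)).mono_set Set.Ioo_subset_Icc_self
  have hKnn : 0 ≤ K := by
    apply integral_nonneg
    intro x
    simp only [hBdef]
    positivity
  refine ⟨Real.sqrt (2 * K) + Real.sqrt 2 + 1, by positivity, ?_⟩
  intro w v g hw hv hg h
  -- the test function φ = ψ²
  set φ : ℝ → ℝ := fun x => ψ x ^ 2 with hφdef
  have hφc : ContDiff ℝ (⊤ : ℕ∞) φ := hψc.pow 2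
  have hφcs : HasCompactSupport φ := by
    apply hψcs.mono'
    intro x hx
    simp only [Function.mem_support, hφdef] at hx
    exact subset_tsupport ψ (by
      simp only [Function.mem_support]
      exact fun hzero => hx (by rw [hzero]; ring))
  have htsup : tsupport φ ⊆ Set.Ioo (-2 : ℝ) 2 := by
    have h1 : tsupport φ ⊆ tsupport ψ := by
      apply closure_mono
      intro x hx
      simp only [Function.mem_support, hφdef] at hx ⊢
      exact fun hzero => hx (by rw [hzero]; ring)
    have h2 : tsupport ψ = Metric.closedBall (0:ℝ) (3/2) := ψb.tsupport_eq
    refine h1.trans ?_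
    rw [h2, Real.closedBall_eq_Icc]
    exact Set.Icc_subset_Ioo (by norm_num) (by norm_num)
  have hψone : ∀ x ∈ Set.Ioo (-1 : ℝ) 1, ψ x = 1 := by
    intro x hx
    apply ψb.one_of_mem_closedBall
    rw [Real.closedBall_eq_Icc]
    have hrIn : ψb.rIn = 1 := rfl
    rw [hrIn, Set.mem_Icc]
    constructor <;> [linarith [hx.1]; linarith [hx.2]]
  have hdψ : ∀ x, HasDerivAt ψ (ψ' x) x := fun x =>
    ((hψc.differentiable (by simp)) x).hasDerivAt
  have hφ' : ∀ x, deriv φ x = 2 * ψ x * ψ' x := by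
    intro x
    have := ((hdψ x).pow 2).deriv
    rw [hφdef]
    rw [show (fun x => ψ x ^ 2) = ψ ^ 2 from rfl, this, show (2:ℕ) - 1 = 1 from rfl, pow_one]
    push_cast
    ring
  have hφ'cont : Continuous (deriv φ) := by
    have : deriv φ = fun x => 2 * ψ x * ψ' x := funext hφ'
    rw [this]; fun_prop
  have hφcont : Continuous φ := hφc.continuous
  have hφbdd : ∀ x, ‖φ x‖ ≤ 1 := by
    intro x
    rw [Real.norm_eq_abs, abs_of_nonneg (by positivity)]
    calc ψ x ^ 2 ≤ 1 ^ 2 := by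
          apply pow_le_pow_left₀ (hψ0 x) (hψ1 x)
      _ = 1 := one_pow 2
  have hMnn : 0 ≤ M := le_trans (norm_nonneg _) (hM 0)
  have hφ'bdd : ∀ x, ‖deriv φ x‖ ≤ 2 * M := by
    intro x
    rw [hφ' x, Real.norm_eq_abs, abs_mul, abs_mul]
    have h1 : |ψ x| ≤ 1 := by rw [abs_of_nonneg (hψ0 x)]; exact hψ1 x
    have h2 : |ψ' x| ≤ M := hM x
    calc |(2:ℝ)| * |ψ x| * |ψ' x| ≤ 2 * 1 * M := by
          apply mul_le_mul _ h2 (abs_nonneg _) (by norm_num)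
          rw [abs_of_nonneg (by norm_num : (0:ℝ) ≤ 2)]
          nlinarith
      _ = 2 * M := by ring
  -- integrability
  set μ := volume.restrict (Set.Ioo (-2 : ℝ) 2) with hμdef
  have hw1 : Integrable w μ :=
    memLp_one_iff_integrable.mp (hw.mono_exponent (by norm_num))
  have hv1 : Integrable v μ :=
    memLp_one_iff_integrable.mp (hv.mono_exponent (by norm_num))
  have hg1 : Integrable g μ :=
    memLp_one_iff_integrable.mp (hg.mono_exponent (by norm_num))
  have hw2 : Integrable (fun x => w x ^ 2) μ := hw.integrable_sq
  have hv2 : Integrable (fun x => v x ^ 2) μ := hv.integrable_sq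
  have hg2 : Integrable (fun x => g x ^ 2) μ := hg.integrable_sq
  have I1 : Integrable (fun x => w x * deriv φ x) μ := by
    have := hw1.bdd_mul hφ'cont.aestronglyMeasurable (ae_of_all _ hφ'bdd)
    simpa [mul_comm] using this
  have I2 : Integrable (fun x => w x * φ x) μ := by
    have := hw1.bdd_mul hφcont.aestronglyMeasurable (ae_of_all _ hφbdd)
    simpa [mul_comm] using this
  have I3 : Integrable (fun x => w x ^ 2 * φ x) μ := by
    have := hw2.bdd_mul hφcont.aestronglyMeasurable (ae_of_all _ hφbdd)
    simpa [mul_comm] using this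
  have I4 : Integrable (fun x => v x * deriv φ x) μ := by
    have := hv1.bdd_mul hφ'cont.aestronglyMeasurable (ae_of_all _ hφ'bdd)
    simpa [mul_comm] using this
  have I5 : Integrable (fun x => g x * φ x) μ := by
    have := hg1.bdd_mul hφcont.aestronglyMeasurable (ae_of_all _ hφbdd)
    simpa [mul_comm] using this
  -- the three pieces
  set F : ℝ → ℝ := fun x => -(w x * deriv φ x) + (2 * (w x * φ x) + w x ^ 2 * φ x)
    with hFdef
  set G : ℝ → ℝ := fun x => -(v x * deriv φ x) + g x * φ x with hGdef
  set H : ℝ → ℝ := fun x => w x * deriv φ x - 2 * (w x * φ x) with hHdef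
  have IF : Integrable F μ := I1.neg.add ((I2.const_mul 2).add I3)
  have IG : Integrable G μ := I4.neg.add I5
  have IH : Integrable H μ := I1.sub (I2.const_mul 2)
  have heq := h φ hφc hφcs htsup
  have heqFG : ∫ x in Set.Ioo (-2:ℝ) 2, F x = ∫ x in Set.Ioo (-2:ℝ) 2, G x := by
    have e1 : (fun x => -(w x) * deriv φ x + (2 * w x + (w x) ^ 2) * φ x) = F := by
      funext x; simp only [hFdef]; ring
    have e2 : (fun x => -(v x) * deriv φ x + g x * φ x) = G := by
      funext x; simp only [hGdef]; ring
    rw [← e1, ← e2]; exact heq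
  -- key identity
  have key : ∫ x in Set.Ioo (-2:ℝ) 2, w x ^ 2 * φ x
      = ∫ x in Set.Ioo (-2:ℝ) 2, (G x + H x) := by
    have e3 : (fun x => w x ^ 2 * φ x) = fun x => F x + H x := by
      funext x; simp only [hFdef, hHdef]; ring
    calc ∫ x in Set.Ioo (-2:ℝ) 2, w x ^ 2 * φ x
        = ∫ x in Set.Ioo (-2:ℝ) 2, (F x + H x) := by rw [e3]
      _ = (∫ x in Set.Ioo (-2:ℝ) 2, F x) + ∫ x in Set.Ioo (-2:ℝ) 2, H x :=
          integral_add IF IH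
      _ = (∫ x in Set.Ioo (-2:ℝ) 2, G x) + ∫ x in Set.Ioo (-2:ℝ) 2, H x := by
          rw [heqFG]
      _ = ∫ x in Set.Ioo (-2:ℝ) 2, (G x + H x) := (integral_add IG IH).symm
  -- pointwise bound
  have hpt : ∀ x, G x + H x ≤ (1/2) * (w x ^ 2 * φ x) + v x ^ 2 + g x ^ 2 + B x := by
    intro x
    simp only [hGdef, hHdef, hBdef, hφ' x]
    simp only [hφdef]
    nlinarith [sq_nonneg (v x + ψ x * ψ' x), sq_nonneg (g x - ψ x ^ 2),
      sq_nonneg (w x * ψ x / 2 - 2 * ψ' x), sq_nonneg (w x * ψ x / 2 + 2 * ψ x),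
      sq_nonneg (g x)]
  set a := ∫ x in Set.Ioo (-2:ℝ) 2, v x ^ 2 with hadef
  set b := ∫ x in Set.Ioo (-2:ℝ) 2, g x ^ 2 with hbdef
  have hann : 0 ≤ a := integral_nonneg fun x => sq_nonneg _
  have hbnn : 0 ≤ b := integral_nonneg fun x => sq_nonneg _
  have IA1 : Integrable (fun x => (1/2) * (w x ^ 2 * φ x)) μ := I3.const_mul (1/2)
  have IA2 : Integrable (fun x => (1/2) * (w x ^ 2 * φ x) + v x ^ 2) μ := IA1.add hv2
  have IA3 : Integrable (fun x => (1/2) * (w x ^ 2 * φ x) + v x ^ 2 + g x ^ 2) μ :=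
    IA2.add hg2
  have IRHS : Integrable
      (fun x => (1/2) * (w x ^ 2 * φ x) + v x ^ 2 + g x ^ 2 + B x) μ := IA3.add hBint
  have step : ∫ x in Set.Ioo (-2:ℝ) 2, (G x + H x)
      ≤ ∫ x in Set.Ioo (-2:ℝ) 2,
        ((1/2) * (w x ^ 2 * φ x) + v x ^ 2 + g x ^ 2 + B x) :=
    integral_mono (IG.add IH) IRHS hpt
  have e1 : ∫ x in Set.Ioo (-2:ℝ) 2,
        ((1/2) * (w x ^ 2 * φ x) + v x ^ 2 + g x ^ 2 + B x)
      = (∫ x in Set.Ioo (-2:ℝ) 2, ((1/2) * (w x ^ 2 * φ x) + v x ^ 2 + g x ^ 2)) + K :=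
    integral_add IA3 hBint
  have e2 : ∫ x in Set.Ioo (-2:ℝ) 2, ((1/2) * (w x ^ 2 * φ x) + v x ^ 2 + g x ^ 2)
      = (∫ x in Set.Ioo (-2:ℝ) 2, ((1/2) * (w x ^ 2 * φ x) + v x ^ 2)) + b :=
    integral_add IA2 hg2
  have e3 : ∫ x in Set.Ioo (-2:ℝ) 2, ((1/2) * (w x ^ 2 * φ x) + v x ^ 2)
      = (∫ x in Set.Ioo (-2:ℝ) 2, (1/2) * (w x ^ 2 * φ x)) + a :=
    integral_add IA1 hv2
  have e4 : ∫ x in Set.Ioo (-2:ℝ) 2, (1/2) * (w x ^ 2 * φ x)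
      = (1/2) * ∫ x in Set.Ioo (-2:ℝ) 2, w x ^ 2 * φ x :=
    integral_const_mul (1/2) _
  have split : ∫ x in Set.Ioo (-2:ℝ) 2,
        ((1/2) * (w x ^ 2 * φ x) + v x ^ 2 + g x ^ 2 + B x)
      = (1/2) * (∫ x in Set.Ioo (-2:ℝ) 2, w x ^ 2 * φ x) + a + b + K := by
    rw [e1, e2, e3, e4]
  have main : ∫ x in Set.Ioo (-2:ℝ) 2, w x ^ 2 * φ x ≤ 2 * K + 2 * a + 2 * b := by
    have := key.le.trans (step.trans split.le)
    linarith
  -- restrict to (-1,1)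
  have small : ∫ x in Set.Ioo (-1:ℝ) 1, w x ^ 2
      ≤ ∫ x in Set.Ioo (-2:ℝ) 2, w x ^ 2 * φ x := by
    have e : ∫ x in Set.Ioo (-1:ℝ) 1, w x ^ 2
        = ∫ x in Set.Ioo (-1:ℝ) 1, w x ^ 2 * φ x := by
      apply setIntegral_congr_fun measurableSet_Ioo
      intro x hx
      simp only [hφdef, hψone x hx]
      ring
    rw [e]
    apply setIntegral_mono_set I3
    · filter_upwards with x
      have := hψ0 x
      simp only [hφdef]
      positivity
    · exact HasSubset.Subset.eventuallyLE (Set.Ioo_subset_Ioo (by norm_num) (by norm_num))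
  have final : ∫ x in Set.Ioo (-1:ℝ) 1, w x ^ 2 ≤ 2 * K + 2 * a + 2 * b :=
    small.trans main
  -- take square roots
  have s1 : Real.sqrt (∫ x in Set.Ioo (-1:ℝ) 1, w x ^ 2)
      ≤ Real.sqrt (2 * K + 2 * a + 2 * b) := Real.sqrt_le_sqrt final
  have s2 : Real.sqrt (2 * K + 2 * a + 2 * b)
      ≤ Real.sqrt (2 * K) + Real.sqrt (2 * a) + Real.sqrt (2 * b) := by
    calc Real.sqrt (2 * K + 2 * a + 2 * b)
        ≤ Real.sqrt (2 * K + 2 * a) + Real.sqrt (2 * b) :=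
          my_sqrt_add (by linarith) (by linarith)
      _ ≤ Real.sqrt (2 * K) + Real.sqrt (2 * a) + Real.sqrt (2 * b) := by
          have := my_sqrt_add (a := 2*K) (b := 2*a) (by linarith) (by linarith)
          linarith
  have s3 : Real.sqrt (2 * a) = Real.sqrt 2 * Real.sqrt a :=
    Real.sqrt_mul (by norm_num) a
  have s4 : Real.sqrt (2 * b) = Real.sqrt 2 * Real.sqrt b :=
    Real.sqrt_mul (by norm_num) b
  have h2K : 0 ≤ Real.sqrt (2 * K) := Real.sqrt_nonneg _
  have hsa : 0 ≤ Real.sqrt a := Real.sqrt_nonneg _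
  have hsb : 0 ≤ Real.sqrt b := Real.sqrt_nonneg _
  have hs2 : 0 ≤ Real.sqrt 2 := Real.sqrt_nonneg _
  calc Real.sqrt (∫ x in Set.Ioo (-1:ℝ) 1, w x ^ 2)
      ≤ Real.sqrt (2 * K) + Real.sqrt 2 * Real.sqrt a + Real.sqrt 2 * Real.sqrt b := by
        rw [← s3, ← s4]; linarith [s1.trans s2]
    _ ≤ (Real.sqrt (2 * K) + Real.sqrt 2 + 1) * (1 + Real.sqrt a + Real.sqrt b) := by
        nlinarith
end

section
/- Let 2 ≤ r < ∞ and 1 ≤ p, q ≤ ∞ with 1/p + 1/q = 2/r. Then for every Schwartz function f : ℝ → ℝ: ‖f'‖²_{L^r} ≤ (r−1)·‖f‖_{L^p}·‖f''‖_{L^q}. -/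
open MeasureTheory
open Filter
open scoped ENNReal Topology

lemma hasDerivAt_abs_rpow_mul {r : ℝ} (hr : 2 ≤ r) (y : ℝ) :
    HasDerivAt (fun y : ℝ => |y| ^ (r - 2) * y) ((r - 1) * |y| ^ (r - 2)) y := by
  rcases lt_trichotomy y 0 with hy | hy | hy
  · have h1 : HasDerivAt (fun z : ℝ => (-z) ^ (r - 2)) ((r - 2) * (-y) ^ (r - 2 - 1) * (-1)) y :=
      (Real.hasDerivAt_rpow_const (p := r - 2) (Or.inl (by linarith))).comp y (hasDerivAt_neg y)
    have h2 := h1.mul (hasDerivAt_id y)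
    have heq : (fun z : ℝ => |z| ^ (r - 2) * z) =ᶠ[𝓝 y] fun z : ℝ => (-z) ^ (r - 2) * z := by
      filter_upwards [eventually_lt_nhds hy] with z hz
      rw [abs_of_neg hz]
    refine (HasDerivAt.congr_of_eventuallyEq ?_ heq)
    convert h2 using 1
    · rfl
    · rfl
    have hny : (0:ℝ) < -y := by linarith
    have : (-y) ^ (r - 2 - 1) * (-y) = (-y) ^ (r - 2) := by
      rw [← Real.rpow_add_one (by positivity) (r - 2 - 1)]; ring_nf
    rw [abs_of_neg hy, id_eq]
    nlinarith [this]
  · subst hy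
    rcases eq_or_lt_of_le hr with hr2 | hr2
    · have : (fun z : ℝ => |z| ^ (r - 2) * z) = fun z : ℝ => z := by
        funext z; rw [← hr2]; norm_num
      rw [this, ← hr2]
      norm_num
      exact hasDerivAt_id 0
    · have hpos : 0 < r - 2 := by linarith
      have hval : |(0:ℝ)| ^ (r - 2) = 0 := by
        rw [abs_zero, Real.zero_rpow hpos.ne']
      rw [hval, mul_zero]
      rw [hasDerivAt_iff_tendsto_slope]
      have hcont : ContinuousAt (fun z : ℝ => |z| ^ (r - 2)) 0 := by
        have := (Real.continuousAt_rpow_const |(0:ℝ)| (r - 2) (Or.inr hpos.le))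
        exact this.comp continuous_abs.continuousAt
      have : Tendsto (fun z : ℝ => |z| ^ (r - 2)) (𝓝[≠] (0:ℝ)) (𝓝 0) := by
        have h := hcont.tendsto.mono_left (nhdsWithin_le_nhds (s := {(0:ℝ)}ᶜ))
        simpa [abs_zero, Real.zero_rpow hpos.ne'] using h
      refine this.congr' ?_
      filter_upwards [eventually_mem_nhdsWithin] with z hz
      have hz0 : z ≠ 0 := hz
      rw [slope_def_field]
      field_simp
      simp
  · have h1 : HasDerivAt (fun z : ℝ => z ^ (r - 2)) ((r - 2) * y ^ (r - 2 - 1)) y :=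
      Real.hasDerivAt_rpow_const (Or.inl hy.ne')
    have h2 := h1.mul (hasDerivAt_id y)
    have heq : (fun z : ℝ => |z| ^ (r - 2) * z) =ᶠ[𝓝 y] fun z : ℝ => z ^ (r - 2) * z := by
      filter_upwards [eventually_gt_nhds hy] with z hz
      rw [abs_of_pos hz]
    refine (HasDerivAt.congr_of_eventuallyEq ?_ heq)
    convert h2 using 1
    · rfl
    · rfl
    have : y ^ (r - 2 - 1) * y = y ^ (r - 2) := by
      rw [← Real.rpow_add_one hy.ne' (r - 2 - 1)]; ring_nf
    rw [abs_of_pos hy, id_eq]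
    nlinarith [this]

lemma abs_rpow_mul_self {r : ℝ} (hr : 2 ≤ r) (y : ℝ) :
    |y| ^ (r - 2) * y * y = |y| ^ r := by
  rcases eq_or_ne y 0 with h | h
  · subst h
    rw [abs_zero, Real.zero_rpow (by positivity : r ≠ 0)]
    ring
  · have h2 : y * y = |y| ^ (2:ℝ) := by
      rw [show (2:ℝ) = ((2:ℕ):ℝ) by norm_num, Real.rpow_natCast, ← abs_mul_abs_self y]; ring
    rw [mul_assoc, h2, ← Real.rpow_add (abs_pos.2 h)]
    ring_nf

/-- Elementary interpolation inequality with explicit constant: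
for `2 ≤ r < ∞` and `1 ≤ p, q ≤ ∞` with `1/p + 1/q = 2/r`,
`‖f'‖²_{L^r} ≤ (r-1) ‖f‖_{L^p} ‖f''‖_{L^q}` for Schwartz `f`. -/
theorem stmt_9 (r : ℝ) (hr : 2 ≤ r) (p q : ℝ≥0∞) (hp : 1 ≤ p) (hq : 1 ≤ q)
    (hpq : 1 / p + 1 / q = 2 / ENNReal.ofReal r) :
    ∀ f : SchwartzMap ℝ ℝ,
      eLpNorm (deriv (⇑f)) (ENNReal.ofReal r) volume ^ 2
        ≤ ENNReal.ofReal (r - 1) * eLpNorm (⇑f) p volume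
            * eLpNorm (deriv (deriv (⇑f))) q volume := by
  intro f
  have hr0 : (0:ℝ) < r := by linarith
  have hr2 : (0:ℝ) ≤ r - 2 := by linarith
  have hr1 : (0:ℝ) ≤ r - 1 := by linarith
  set a : ℝ≥0∞ := ENNReal.ofReal r with ha_def
  have ha0 : a ≠ 0 := by simp [ha_def, hr0]
  have hat : a ≠ ∞ := ENNReal.ofReal_ne_top
  -- Schwartz derivatives
  set g : SchwartzMap ℝ ℝ := SchwartzMap.derivCLM ℝ ℝ f with hgdef
  set g2 : SchwartzMap ℝ ℝ := SchwartzMap.derivCLM ℝ ℝ g with hg2def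
  have hgf : deriv (⇑f) = ⇑g := funext fun x => (SchwartzMap.derivCLM_apply ℝ f x).symm
  have hg2f : deriv (⇑g) = ⇑g2 := funext fun x => (SchwartzMap.derivCLM_apply ℝ g x).symm
  rw [hgf, hg2f]
  -- weight function
  set w : ℝ → ℝ := fun x => |g x| ^ (r - 2) with hwdef
  have hw_cont : Continuous w :=
    (g.continuous.abs).rpow_const fun x => Or.inr hr2
  set C : ℝ := SchwartzMap.seminorm ℝ 0 0 g with hCdef
  have hC : ∀ x, ‖g x‖ ≤ C := fun x => SchwartzMap.norm_le_seminorm ℝ g x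
  have hC0 : 0 ≤ C := le_trans (norm_nonneg _) (hC 0)
  have hwb : ∀ x, ‖w x‖ ≤ C ^ (r - 2) := by
    intro x
    rw [hwdef]
    simp only [Real.norm_eq_abs]
    rw [abs_of_nonneg (Real.rpow_nonneg (abs_nonneg _) _)]
    exact Real.rpow_le_rpow (abs_nonneg _) (hC x) hr2
  have hw_meas : AEStronglyMeasurable w volume := hw_cont.aestronglyMeasurable
  -- derivatives as HasDerivAt
  have hgd : ∀ x, HasDerivAt (⇑g) (g2 x) x := by
    intro x
    have := (g.differentiableAt : DifferentiableAt ℝ (⇑g) x).hasDerivAt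
    rwa [show deriv (⇑g) x = g2 x from (SchwartzMap.derivCLM_apply ℝ g x).symm] at this
  have hfd : ∀ x, HasDerivAt (⇑f) (g x) x := by
    intro x
    have := (f.differentiableAt : DifferentiableAt ℝ (⇑f) x).hasDerivAt
    rwa [show deriv (⇑f) x = g x from (SchwartzMap.derivCLM_apply ℝ f x).symm] at this
  -- u and u'
  set u : ℝ → ℝ := fun x => w x * g x with hudef
  set u' : ℝ → ℝ := fun x => ((r - 1) * w x) * g2 x with hu'def
  have hu : ∀ x, HasDerivAt u (u' x) x := by
    intro x
    exact (hasDerivAt_abs_rpow_mul hr (g x)).comp x (hgd x)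
  -- integrabilities
  have hgg : Integrable (fun x => g x * g x) volume :=
    g.integrable.bdd_mul g.continuous.aestronglyMeasurable (ae_of_all _ hC)
  have hg2g : Integrable (fun x => g2 x * ⇑f x) volume :=
    (SchwartzMap.integrable f).bdd_mul g2.continuous.aestronglyMeasurable
      (ae_of_all _ fun x => SchwartzMap.norm_le_seminorm ℝ g2 x)
  have hgfint : Integrable (fun x => g x * ⇑f x) volume :=
    (SchwartzMap.integrable f).bdd_mul g.continuous.aestronglyMeasurable (ae_of_all _ hC)
  have A1 : Integrable (fun x => u x * g x) volume := by
    have := hgg.bdd_mul hw_meas (ae_of_all _ hwb)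
    exact this.congr (Eventually.of_forall fun x => by simp [hudef]; ring)
  have A2 : Integrable (fun x => u' x * ⇑f x) volume := by
    have h1 : Integrable (fun x => w x * (g2 x * ⇑f x)) volume :=
      hg2g.bdd_mul hw_meas (ae_of_all _ hwb)
    have := h1.const_mul (r - 1)
    exact this.congr (Eventually.of_forall fun x => by simp [hu'def]; ring)
  have A3 : Integrable (fun x => u x * ⇑f x) volume := by
    have := hgfint.bdd_mul hw_meas (ae_of_all _ hwb)
    exact this.congr (Eventually.of_forall fun x => by simp [hudef]; ring)
  -- H
  set H : ℝ → ℝ := fun x => ⇑f x * (w x * g2 x) with hHdef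
  have hH_int : Integrable H volume := by
    have h1 : Integrable (fun x => w x * (g2 x * ⇑f x)) volume :=
      hg2g.bdd_mul hw_meas (ae_of_all _ hwb)
    exact h1.congr (Eventually.of_forall fun x => by simp [hHdef]; ring)
  -- integration by parts
  have hibp : ∫ x, u x * g x = - ∫ x, u' x * ⇑f x :=
    integral_mul_deriv_eq_deriv_mul_of_integrable (fun x _ => hu x) (fun x _ => hfd x) A1 A2 A3
  -- |g|^r integrable
  have hgr_int : Integrable (fun x => |g x| ^ r) volume :=
    A1.congr (Eventually.of_forall fun x => by
      simp only [hudef]; exact abs_rpow_mul_self hr (g x))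
  -- real inequality
  have hreal : ∫ x, |g x| ^ r ≤ (r - 1) * ∫ x, ‖H x‖ := by
    have e1 : ∫ x, |g x| ^ r = ∫ x, u x * g x := by
      congr 1; funext x; exact (abs_rpow_mul_self hr (g x)).symm
    have e2 : ∫ x, u' x * ⇑f x = (r - 1) * ∫ x, H x := by
      rw [← integral_const_mul]
      congr 1; funext x; simp only [hu'def, hHdef]; ring
    rw [e1, hibp, e2, neg_mul_eq_mul_neg]
    apply mul_le_mul_of_nonneg_left _ hr1
    calc - ∫ x, H x ≤ |∫ x, H x| := neg_le_abs _
      _ ≤ ∫ x, ‖H x‖ := by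
          rw [← Real.norm_eq_abs]; exact norm_integral_le_integral_norm H
  -- conversion to ENNReal
  set N : ℝ≥0∞ := eLpNorm (⇑g) a volume with hNdef
  have hNr : N ^ (r : ℝ) = ENNReal.ofReal (∫ x, |g x| ^ r) := by
    rw [hNdef, eLpNorm_eq_lintegral_rpow_enorm_toReal ha0 hat, ha_def,
      ENNReal.toReal_ofReal hr0.le, ← ENNReal.rpow_mul, one_div,
      inv_mul_cancel₀ hr0.ne', ENNReal.rpow_one,
      MeasureTheory.ofReal_integral_eq_lintegral_ofReal hgr_int
        (Eventually.of_forall fun x => Real.rpow_nonneg (abs_nonneg _) r)]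
    refine lintegral_congr fun x => ?_
    rw [← Real.norm_eq_abs, ← ENNReal.ofReal_rpow_of_nonneg (norm_nonneg _) hr0.le,
      ofReal_norm_eq_enorm]
  -- eLpNorm H 1
  have hH1 : eLpNorm H 1 volume = ENNReal.ofReal (∫ x, ‖H x‖) := by
    rw [eLpNorm_one_eq_lintegral_enorm, ← ofReal_integral_norm_eq_lintegral_enorm hH_int]
  have hstep1 : N ^ (r:ℝ) ≤ ENNReal.ofReal (r - 1) * eLpNorm H 1 volume := by
    rw [hNr, hH1, ← ENNReal.ofReal_mul hr1]
    exact ENNReal.ofReal_le_ofReal hreal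
  -- exponents
  set s : ℝ≥0∞ := a / ENNReal.ofReal (r - 2) with hsdef
  set p' : ℝ≥0∞ := (1/s + 1/q)⁻¹ with hp'def
  have hinv_s : 1 / s = ENNReal.ofReal (r - 2) / a := by
    rw [hsdef, one_div, ENNReal.inv_div (Or.inl ENNReal.ofReal_ne_top) (Or.inr ha0)]
  have hsq : 1 / p' = 1 / s + 1 / q := by
    rw [hp'def, one_div, inv_inv]
  have hsum : 1 / (1:ℝ≥0∞) = 1 / p + 1 / p' := by
    rw [hsq, hinv_s]
    have hre : 1 / p + (ENNReal.ofReal (r - 2) / a + 1 / q)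
        = (1 / p + 1 / q) + ENNReal.ofReal (r - 2) / a := by ring
    rw [hre, hpq, ENNReal.div_add_div_same]
    have h2 : (2:ℝ≥0∞) + ENNReal.ofReal (r - 2) = a := by
      rw [ha_def, show (2:ℝ≥0∞) = ENNReal.ofReal 2 by simp,
        ← ENNReal.ofReal_add (by norm_num) hr2]
      norm_num
    rw [h2, ENNReal.div_self ha0 hat, one_div_one]
  -- Hölder
  set G : ℝ → ℝ := fun x => w x * g2 x with hGdef
  have hG_meas : AEStronglyMeasurable G volume :=
    (hw_cont.mul g2.continuous).aestronglyMeasurable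
  have hold1 : eLpNorm H 1 volume ≤ eLpNorm (⇑f) p volume * eLpNorm G p' volume := by
    have h := eLpNorm_smul_le_mul_eLpNorm (μ := volume) (p := p) (q := p') (r := 1)
      hG_meas f.continuous.aestronglyMeasurable (hpqr := ⟨by simpa only [one_div] using hsum.symm⟩)
    have he : (⇑f • G) = H := by funext x; simp [hHdef, hGdef, smul_eq_mul]
    rwa [he] at h
  have hold2 : eLpNorm G p' volume ≤ eLpNorm w s volume * eLpNorm (⇑g2) q volume := by
    have h := eLpNorm_smul_le_mul_eLpNorm (μ := volume) (p := s) (q := q) (r := p')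
      g2.continuous.aestronglyMeasurable hw_meas (hpqr := ⟨by simpa only [one_div] using hsq.symm⟩)
    have he : (w • ⇑g2) = G := by funext x; simp [hGdef, smul_eq_mul]
    rwa [he] at h
  have hvol : (volume : Measure ℝ) ≠ 0 := by
    intro h
    have := congrArg (fun μ : Measure ℝ => μ (Set.Icc 0 1)) h
    simp [Real.volume_Icc] at this
  have hws : eLpNorm w s volume ≤ N ^ (r - 2) := by
    rcases eq_or_lt_of_le hr with hr2' | hr2'
    · -- r = 2
      have hw1 : w = fun _ : ℝ => (1:ℝ) := by
        funext x; simp [hwdef, ← hr2', Real.rpow_zero]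
      have hs_top : s = ∞ := by
        rw [hsdef, ← hr2']
        simp [ENNReal.div_zero ha0]
      rw [hw1, hs_top, ← hr2']
      have h1 : eLpNorm (fun _ : ℝ => (1:ℝ)) ∞ volume = 1 := by
        rw [eLpNorm_exponent_top, eLpNormEssSup_const 1 hvol]
        simp
      rw [h1]
      norm_num
    · -- r > 2
      have hne : ENNReal.ofReal (r - 2) ≠ 0 := by
        simp only [ne_eq, ENNReal.ofReal_eq_zero, not_le]
        linarith
      have hmul : s * ENNReal.ofReal (r - 2) = a :=
        ENNReal.div_mul_cancel hne ENNReal.ofReal_ne_top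
      have h := eLpNorm_norm_rpow (p := s) (μ := volume) (⇑g)
        (by linarith : (0:ℝ) < r - 2)
      rw [hmul] at h
      have he : w = fun x => ‖g x‖ ^ (r - 2) := by
        funext x; simp [hwdef, Real.norm_eq_abs]
      rw [he, h]
  -- assemble
  have master : N ^ (r:ℝ)
      ≤ (ENNReal.ofReal (r - 1) * eLpNorm (⇑f) p volume * eLpNorm (⇑g2) q volume)
        * N ^ (r - 2) := by
    calc N ^ (r:ℝ) ≤ ENNReal.ofReal (r - 1) * eLpNorm H 1 volume := hstep1
      _ ≤ ENNReal.ofReal (r - 1) * (eLpNorm (⇑f) p volume * eLpNorm G p' volume) :=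
          mul_le_mul_right hold1 _
      _ ≤ ENNReal.ofReal (r - 1)
            * (eLpNorm (⇑f) p volume * (eLpNorm w s volume * eLpNorm (⇑g2) q volume)) :=
          mul_le_mul_right (mul_le_mul_right hold2 _) _
      _ ≤ ENNReal.ofReal (r - 1)
            * (eLpNorm (⇑f) p volume * (N ^ (r - 2) * eLpNorm (⇑g2) q volume)) := by
          gcongr
      _ = (ENNReal.ofReal (r - 1) * eLpNorm (⇑f) p volume * eLpNorm (⇑g2) q volume)
            * N ^ (r - 2) := by ring
  -- finish
  rcases eq_or_ne N 0 with hN0 | hN0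
  · rw [hN0]
    simp
  have hNt : N ≠ ∞ := by
    intro h
    rw [h, ENNReal.top_rpow_of_pos hr0] at hNr
    exact ENNReal.ofReal_ne_top hNr.symm
  have hx0 : N ^ (r - 2) ≠ 0 := by
    simp [ENNReal.rpow_eq_zero_iff, hN0, hNt]
  have hxt : N ^ (r - 2) ≠ ∞ := ENNReal.rpow_ne_top_of_nonneg hr2 hNt
  have hsplit : N ^ (r:ℝ) = N ^ (2:ℝ) * N ^ (r - 2) := by
    rw [← ENNReal.rpow_add _ _ hN0 hNt]
    norm_num
  have hpow2 : N ^ (2:ℕ) = N ^ (2:ℝ) := by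
    rw [← ENNReal.rpow_natCast]
    norm_num
  rw [hpow2]
  refine (ENNReal.mul_le_mul_iff_left hx0 hxt).mp ?_
  rw [← hsplit]
  exact master
end

section
/- Let 0 < s < 1, let 1 ≤ p, q ≤ ∞, and define r by 1/r = (1−s)/q + s/p. Then for every Schwartz function f : ℝ → ℝ: sup_{h>0} h^{−s}·‖f(·+h) − f‖_{L^r} ≤ 2^{1−s}·‖f‖_{L^q}^{1−s}·‖f'‖_{L^p}^{s}. -/
open MeasureTheory
open scoped ENNReal

lemma deriv_cont (f : SchwartzMap ℝ ℝ) : Continuous (deriv (⇑f)) := by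
  have : deriv (⇑f) = ⇑(SchwartzMap.derivCLM ℝ ℝ f) := by
    funext x; simp
  rw [this]; exact (SchwartzMap.derivCLM ℝ ℝ f).continuous

lemma ptwise (f : SchwartzMap ℝ ℝ) (h : ℝ) (hh : 0 < h) (x : ℝ) :
    (‖f (x + h) - f x‖₊ : ℝ≥0∞) ≤ ∫⁻ t in Set.Ioc 0 h, ‖deriv (⇑f) (x + t)‖₊ := by
  have hcd : Continuous (deriv (⇑f)) := deriv_cont f
  have hftc : f (x + h) - f x = ∫ t in x..(x + h), deriv (⇑f) t := by
    rw [intervalIntegral.integral_deriv_eq_sub (fun t _ => f.differentiableAt)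
      (hcd.intervalIntegrable _ _)]
  have hcv : (∫ t in x..(x + h), deriv (⇑f) t) = ∫ t in (0:ℝ)..h, deriv (⇑f) (x + t) := by
    rw [intervalIntegral.integral_comp_add_left (fun t => deriv (⇑f) t) x]
    norm_num
  have habs : |f (x + h) - f x| ≤ ∫ t in Set.Ioc 0 h, |deriv (⇑f) (x + t)| := by
    rw [hftc, hcv]
    calc |∫ t in (0:ℝ)..h, deriv (⇑f) (x + t)| ≤ ∫ t in (0:ℝ)..h, |deriv (⇑f) (x + t)| :=
          intervalIntegral.abs_integral_le_integral_abs hh.le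
      _ = _ := intervalIntegral.integral_of_le hh.le
  have hint : IntegrableOn (fun t => |deriv (⇑f) (x + t)|) (Set.Ioc 0 h) volume :=
    ((hcd.comp (continuous_const.add continuous_id)).abs).integrableOn_Ioc
  calc (‖f (x + h) - f x‖₊ : ℝ≥0∞) = ENNReal.ofReal |f (x + h) - f x| := by
        rw [← Real.norm_eq_abs]; exact (ofReal_norm (f (x + h) - f x)).symm
    _ ≤ ENNReal.ofReal (∫ t in Set.Ioc 0 h, |deriv (⇑f) (x + t)|) := ENNReal.ofReal_le_ofReal habs
    _ = ∫⁻ t in Set.Ioc 0 h, ‖deriv (⇑f) (x + t)‖₊ := by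
        rw [MeasureTheory.ofReal_integral_eq_lintegral_ofReal hint
          (Filter.Eventually.of_forall fun t => abs_nonneg _)]
        congr 1; funext t
        rw [← Real.norm_eq_abs]; exact ofReal_norm (deriv (⇑f) (x + t))

lemma step4 (f : SchwartzMap ℝ ℝ) (p : ℝ≥0∞) (hp : 1 ≤ p) (h : ℝ) (hh : 0 < h) :
    eLpNorm (fun x => f (x + h) - f x) p volume
      ≤ ENNReal.ofReal h * eLpNorm (deriv (⇑f)) p volume := by
  have hcd : Continuous (deriv (⇑f)) := deriv_cont f
  have hp0 : p ≠ 0 := by positivity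
  by_cases hptop : p = ∞
  · subst hptop
    set M := eLpNormEssSup (deriv (⇑f)) volume with hM
    by_cases hMtop : M = ∞
    · have : eLpNorm (deriv (⇑f)) ∞ volume = ∞ := hMtop
      rw [this, ENNReal.mul_top (by simp [ENNReal.ofReal_eq_zero, hh.not_ge])]
      exact le_top
    -- every point value is bounded by essSup, by continuity
    have hbd : ∀ y, (‖deriv (⇑f) y‖₊ : ℝ≥0∞) ≤ M := by
      intro y
      by_contra hlt
      push_neg at hlt
      have hopen : IsOpen {z | M < (‖deriv (⇑f) z‖₊ : ℝ≥0∞)} := by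
        have : Continuous fun z => (‖deriv (⇑f) z‖₊ : ℝ≥0∞) :=
          ENNReal.continuous_coe.comp hcd.nnnorm
        exact isOpen_lt continuous_const this
      have hpos : 0 < volume {z | M < (‖deriv (⇑f) z‖₊ : ℝ≥0∞)} :=
        hopen.measure_pos volume ⟨y, hlt⟩
      have hae : ∀ᵐ z : ℝ, (‖deriv (⇑f) z‖₊ : ℝ≥0∞) ≤ M := ae_le_essSup
      rw [MeasureTheory.ae_iff] at hae
      simp only [not_le] at hae
      exact hpos.ne' hae
    have hbd2 : ∀ x, ‖f (x + h) - f x‖ ≤ h * M.toReal := by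
      intro x
      have h1 : (‖f (x + h) - f x‖₊ : ℝ≥0∞) ≤ ∫⁻ t in Set.Ioc 0 h, ‖deriv (⇑f) (x + t)‖₊ :=
        ptwise f h hh x
      have h2 : (∫⁻ t in Set.Ioc 0 h, ‖deriv (⇑f) (x + t)‖₊) ≤
          ∫⁻ _t in Set.Ioc 0 h, M := lintegral_mono fun t => hbd _
      rw [MeasureTheory.setLIntegral_const, Real.volume_Ioc] at h2
      have h3 : (‖f (x + h) - f x‖₊ : ℝ≥0∞) ≤ ENNReal.ofReal (M.toReal * h) := by
        refine (h1.trans h2).trans_eq ?_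
        rw [ENNReal.ofReal_mul ENNReal.toReal_nonneg, ENNReal.ofReal_toReal hMtop]
        simp
      have := ENNReal.toReal_mono ENNReal.ofReal_ne_top h3
      rw [ENNReal.toReal_ofReal (by positivity)] at this
      simp only [ENNReal.coe_toReal, coe_nnnorm] at this
      linarith [this]
    calc eLpNorm (fun x => f (x + h) - f x) ∞ volume
        ≤ ENNReal.ofReal (h * M.toReal) := by
          rw [eLpNorm_exponent_top]
          exact eLpNormEssSup_le_of_ae_bound (Filter.Eventually.of_forall hbd2)
      _ = ENNReal.ofReal h * M := by
          rw [ENNReal.ofReal_mul hh.le, ENNReal.ofReal_toReal hMtop]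
      _ = _ := by rw [eLpNorm_exponent_top]
  · -- finite p
    set P := p.toReal with hP
    have hPpos : 0 < P := ENNReal.toReal_pos hp0 hptop
    have hP1 : 1 ≤ P := by
      simpa using ENNReal.toReal_mono hptop hp
    set H := ENNReal.ofReal h with hHdef
    have hH0 : H ≠ 0 := by simp [hHdef, hh.not_ge]
    have hHtop : H ≠ ∞ := ENNReal.ofReal_ne_top
    set μ' := volume.restrict (Set.Ioc (0:ℝ) h) with hμ'
    have hμ'univ : μ' Set.univ = H := by
      rw [hμ', Measure.restrict_apply_univ, Real.volume_Ioc]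
      simp [hHdef]
    set C := ∫⁻ y, (‖deriv (⇑f) y‖₊ : ℝ≥0∞) ^ P with hC
    set Φ := fun x => ∫⁻ t, (‖deriv (⇑f) (x + t)‖₊ : ℝ≥0∞) ∂μ' with hΦ
    -- Jensen/Hölder: Φ x ^ P ≤ H^(P-1) * ∫⁻ t, ‖f'(x+t)‖^P
    have jensen : ∀ x, Φ x ^ P ≤
        H ^ (P - 1) * ∫⁻ t, (‖deriv (⇑f) (x + t)‖₊ : ℝ≥0∞) ^ P ∂μ' := by
      intro x
      have hmeas : AEStronglyMeasurable (fun t => deriv (⇑f) (x + t)) μ' :=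
        (hcd.comp (continuous_const.add continuous_id)).aestronglyMeasurable
      have h1 : Φ x = eLpNorm (fun t => deriv (⇑f) (x + t)) 1 μ' := by
        exact (eLpNorm_one_eq_lintegral_enorm (f := fun t => deriv (⇑f) (x + t)) (μ := μ')).symm
      have h2 := eLpNorm_le_eLpNorm_mul_rpow_measure_univ (μ := μ')
        (f := fun t => deriv (⇑f) (x + t)) hp hmeas
      rw [hμ'univ, ← h1] at h2
      have h3 : eLpNorm (fun t => deriv (⇑f) (x + t)) p μ' =
          (∫⁻ t, (‖deriv (⇑f) (x + t)‖₊ : ℝ≥0∞) ^ P ∂μ') ^ (1 / P) :=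
        eLpNorm_eq_lintegral_rpow_enorm_toReal hp0 hptop
      rw [h3] at h2
      have hexp : (1:ℝ≥0∞).toReal⁻¹ - (p.toReal)⁻¹ = 1 - 1/P := by
        simp [hP, one_div]
      calc Φ x ^ P ≤ ((∫⁻ t, (‖deriv (⇑f) (x + t)‖₊ : ℝ≥0∞) ^ P ∂μ') ^ (1 / P)
            * H ^ (1/(1:ℝ≥0∞).toReal - 1/p.toReal)) ^ P :=
            ENNReal.rpow_le_rpow h2 hPpos.le
        _ = _ := by
            rw [ENNReal.mul_rpow_of_nonneg _ _ hPpos.le, ← ENNReal.rpow_mul,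
              ← ENNReal.rpow_mul]
            have e1 : 1 / P * P = 1 := by field_simp
            have e2 : (1 / (1:ℝ≥0∞).toReal - 1 / p.toReal) * P = P - 1 := by
              simp only [ENNReal.toReal_one, ← hP]
              field_simp
            rw [e1, e2, ENNReal.rpow_one, mul_comm]
    -- measurability for swap
    have hFm : Measurable (Function.uncurry fun x t => (‖deriv (⇑f) (x + t)‖₊ : ℝ≥0∞) ^ P) := by
      have : Continuous fun z : ℝ × ℝ => deriv (⇑f) (z.1 + z.2) :=
        hcd.comp (continuous_fst.add continuous_snd)
      exact (this.measurable.nnnorm.coe_nnreal_ennreal).pow_const _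
    have hswap : (∫⁻ x, ∫⁻ t, (‖deriv (⇑f) (x + t)‖₊ : ℝ≥0∞) ^ P ∂μ') = H * C := by
      rw [lintegral_lintegral_swap hFm.aemeasurable]
      have hinner : ∀ t, (∫⁻ x, (‖deriv (⇑f) (x + t)‖₊ : ℝ≥0∞) ^ P) = C := by
        intro t
        exact lintegral_add_right_eq_self (fun y => (‖deriv (⇑f) y‖₊ : ℝ≥0∞) ^ P) t
      simp_rw [hinner]
      rw [setLIntegral_const, Real.volume_Ioc]
      rw [mul_comm]
      simp [hHdef]
    -- main chain
    have hchain : (∫⁻ x, (‖f (x + h) - f x‖₊ : ℝ≥0∞) ^ P) ≤ H ^ P * C := by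
      calc (∫⁻ x, (‖f (x + h) - f x‖₊ : ℝ≥0∞) ^ P) ≤ ∫⁻ x, Φ x ^ P := by
            refine lintegral_mono fun x => ENNReal.rpow_le_rpow ?_ hPpos.le
            exact ptwise f h hh x
        _ ≤ ∫⁻ x, H ^ (P - 1) * ∫⁻ t, (‖deriv (⇑f) (x + t)‖₊ : ℝ≥0∞) ^ P ∂μ' :=
            lintegral_mono jensen
        _ = H ^ (P - 1) * ∫⁻ x, ∫⁻ t, (‖deriv (⇑f) (x + t)‖₊ : ℝ≥0∞) ^ P ∂μ' :=
            lintegral_const_mul' _ _ (by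
              exact ENNReal.rpow_ne_top_of_nonneg (by linarith) hHtop)
        _ = H ^ (P - 1) * (H * C) := by rw [hswap]
        _ = H ^ P * C := by
            rw [← mul_assoc]
            congr 1
            calc H ^ (P - 1) * H = H ^ (P - 1) * H ^ (1:ℝ) := by rw [ENNReal.rpow_one]
              _ = H ^ P := by
                  rw [← ENNReal.rpow_add _ _ hH0 hHtop]
                  norm_num
    calc eLpNorm (fun x => f (x + h) - f x) p volume
        = (∫⁻ x, (‖f (x + h) - f x‖₊ : ℝ≥0∞) ^ P) ^ (1 / P) :=
          eLpNorm_eq_lintegral_rpow_enorm_toReal hp0 hptop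
      _ ≤ (H ^ P * C) ^ (1 / P) := ENNReal.rpow_le_rpow hchain (by positivity)
      _ = H * C ^ (1 / P) := by
          rw [ENNReal.mul_rpow_of_nonneg _ _ (by positivity), ← ENNReal.rpow_mul]
          congr 1
          rw [mul_one_div, div_self hPpos.ne', ENNReal.rpow_one]
      _ = H * eLpNorm (deriv (⇑f)) p volume := by
          exact (congrArg (H * ·) (eLpNorm_eq_lintegral_rpow_enorm_toReal (f := deriv (⇑f)) (μ := volume) hp0 hptop)).symm

/-- Besov-type interpolation: for `0 < s < 1`, `1 ≤ p, q ≤ ∞` and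
`1/r = (1-s)/q + s/p`, the modulus of continuity satisfies
`h^{-s} ‖f(·+h) - f‖_{L^r} ≤ 2^{1-s} ‖f‖_{L^q}^{1-s} ‖f'‖_{L^p}^{s}` for all `h > 0`. -/
theorem stmt_10 (s : ℝ) (hs0 : 0 < s) (hs1 : s < 1)
    (p q : ℝ≥0∞) (hp : 1 ≤ p) (hq : 1 ≤ q) (r : ℝ≥0∞)
    (hr : 1 / r = ENNReal.ofReal (1 - s) / q + ENNReal.ofReal s / p) :
    ∀ f : SchwartzMap ℝ ℝ, ∀ h : ℝ, 0 < h →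
      ENNReal.ofReal (h ^ (-s)) * eLpNorm (fun x => f (x + h) - f x) r volume
        ≤ ENNReal.ofReal (2 ^ (1 - s)) * eLpNorm (⇑f) q volume ^ (1 - s)
            * eLpNorm (deriv (⇑f)) p volume ^ s := by
  intro f h hh
  set g : ℝ → ℝ := fun x => f (x + h) - f x with hg
  have hgc : Continuous g :=
    (f.continuous.comp (continuous_id.add continuous_const)).sub f.continuous
  have h1s : 0 < 1 - s := by linarith
  have ha0 : ENNReal.ofReal (1 - s) ≠ 0 := by simp [h1s.not_ge, ENNReal.ofReal_eq_zero]
  have hatop : ENNReal.ofReal (1 - s) ≠ ∞ := ENNReal.ofReal_ne_top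
  have hb0 : ENNReal.ofReal s ≠ 0 := by simp [hs0.not_ge, ENNReal.ofReal_eq_zero]
  have hbtop : ENNReal.ofReal s ≠ ∞ := ENNReal.ofReal_ne_top
  set Q := q / ENNReal.ofReal (1 - s) with hQ
  set P := p / ENNReal.ofReal s with hP
  have hr' : 1 / r = 1 / Q + 1 / P := by
    rw [hr, hQ, hP, one_div Q, one_div P, ENNReal.inv_div (Or.inl hatop) (Or.inl ha0),
      ENNReal.inv_div (Or.inl hbtop) (Or.inl hb0)]
  -- interpolation between exponents
  have hm1 : AEStronglyMeasurable (fun x => |g x| ^ (1 - s)) volume :=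
    (hgc.abs.rpow_const fun x => Or.inr h1s.le).aestronglyMeasurable
  have hm2 : AEStronglyMeasurable (fun x => |g x| ^ s) volume :=
    (hgc.abs.rpow_const fun x => Or.inr hs0.le).aestronglyMeasurable
  have key1 : eLpNorm g r volume ≤
      eLpNorm (fun x => |g x| ^ (1 - s)) Q volume * eLpNorm (fun x => |g x| ^ s) P volume := by
    have hT : ENNReal.HolderTriple Q P r := ⟨by simpa only [one_div] using hr'.symm⟩
    have := eLpNorm_le_eLpNorm_mul_eLpNorm'_of_norm (μ := volume) (p := Q) (q := P) (r := r) hm1 hm2 (fun u v => u * v) 1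
      (Filter.Eventually.of_forall fun x => by simpa using norm_mul_le _ _)
    rw [ENNReal.coe_one, one_mul] at this
    refine le_trans (le_of_eq ?_) this
    have hfun : (fun x => |g x| ^ (1 - s) * |g x| ^ s) = fun x => |g x| := by
      funext x
      rw [← Real.rpow_add' (abs_nonneg _) (by norm_num)]
      norm_num
    calc eLpNorm g r volume = eLpNorm (fun x => |g x|) r volume := by
          rw [← eLpNorm_norm (f := g)]; rfl
      _ = _ := by rw [hfun]
  have key2 : eLpNorm (fun x => |g x| ^ (1 - s)) Q volume = eLpNorm g q volume ^ (1 - s) := by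
    have := eLpNorm_norm_rpow (p := Q) (μ := volume) g h1s
    rw [hQ, ENNReal.div_mul_cancel ha0 hatop] at this
    exact this
  have key3 : eLpNorm (fun x => |g x| ^ s) P volume = eLpNorm g p volume ^ s := by
    have := eLpNorm_norm_rpow (p := P) (μ := volume) g hs0
    rw [hP, ENNReal.div_mul_cancel hb0 hbtop] at this
    exact this
  have key4 : eLpNorm g q volume ≤ 2 * eLpNorm (⇑f) q volume := by
    have htr : eLpNorm (fun x => f (x + h)) q volume = eLpNorm (⇑f) q volume :=
      eLpNorm_comp_measurePreserving f.continuous.aestronglyMeasurable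
        (measurePreserving_add_right volume h)
    have hsub := eLpNorm_sub_le (μ := volume) (p := q)
      (f := fun x => f (x + h)) (g := ⇑f)
      (f.continuous.comp (continuous_id.add continuous_const)).aestronglyMeasurable
      f.continuous.aestronglyMeasurable hq
    calc eLpNorm g q volume
        ≤ eLpNorm (fun x => f (x + h)) q volume + eLpNorm (⇑f) q volume := hsub
      _ = 2 * eLpNorm (⇑f) q volume := by rw [htr, two_mul]
  have key5 : eLpNorm g p volume ≤ ENNReal.ofReal h * eLpNorm (deriv (⇑f)) p volume :=
    step4 f p hp h hh
  set Nq := eLpNorm (⇑f) q volume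
  set Np := eLpNorm (deriv (⇑f)) p volume
  have main : eLpNorm g r volume ≤
      (2 * Nq) ^ (1 - s) * (ENNReal.ofReal h * Np) ^ s := by
    refine key1.trans ?_
    rw [key2, key3]
    exact mul_le_mul' (ENNReal.rpow_le_rpow key4 h1s.le) (ENNReal.rpow_le_rpow key5 hs0.le)
  calc ENNReal.ofReal (h ^ (-s)) * eLpNorm g r volume
      ≤ ENNReal.ofReal (h ^ (-s)) * ((2 * Nq) ^ (1 - s) * (ENNReal.ofReal h * Np) ^ s) :=
        mul_le_mul_right main _
    _ = ENNReal.ofReal (2 ^ (1 - s)) * Nq ^ (1 - s) * Np ^ s := by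
        rw [ENNReal.mul_rpow_of_nonneg _ _ h1s.le, ENNReal.mul_rpow_of_nonneg _ _ hs0.le]
        have h2 : (2 : ℝ≥0∞) ^ (1 - s) = ENNReal.ofReal (2 ^ (1 - s)) := by
          rw [← ENNReal.ofReal_rpow_of_pos (by norm_num)]
          norm_num
        have h3 : (ENNReal.ofReal h) ^ s = ENNReal.ofReal (h ^ s) := by
          rw [← ENNReal.ofReal_rpow_of_pos hh]
        have h4 : ENNReal.ofReal (h ^ (-s)) * ENNReal.ofReal (h ^ s) = 1 := by
          rw [← ENNReal.ofReal_mul (by positivity), ← Real.rpow_add hh]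
          norm_num
        rw [h2, h3]
        calc ENNReal.ofReal (h ^ (-s)) *
              (ENNReal.ofReal (2 ^ (1 - s)) * Nq ^ (1 - s) * (ENNReal.ofReal (h ^ s) * Np ^ s))
            = (ENNReal.ofReal (h ^ (-s)) * ENNReal.ofReal (h ^ s)) *
              (ENNReal.ofReal (2 ^ (1 - s)) * Nq ^ (1 - s) * Np ^ s) := by ring
          _ = _ := by rw [h4, one_mul]
end
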